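/- The Kolakoski sequence over {1,2} starting with 2 is the limit of iterating, starting from the single letter 2, the position-alternating substitution where letters at even positions are mapped by σ₀ (1↦1, 2↦11) and letters at odd positions by σ₁ (1↦2, 2↦22); equivalently, each such iterate is a prefix of the next and the fixed point equals its own run-length sequence. -/

import Mathlib

namespace Kola

/-- Run-length encoding of a finite word as (letter, count) pairs. -/
def rle : List ℕ → List (ℕ × ℕ)
  | [] => []
  | a :: l =>
    match rle l with
    | [] => [(a, 1)]
    | (b, n) :: t => if a = b then (b, n + 1) :: t else (a, 1) :: (b, n) :: t

/-- Boundary adjustment for the first run: discard if length ≤ r, extend to s if length in (r,s]. -/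
def fixRun (r s : ℕ) : List (ℕ × ℕ) → List (ℕ × ℕ)
  | [] => []
  | (a, n) :: t => if n ≤ r then t else if n ≤ s then (a, s) :: t else (a, n) :: t

/-- The Kolakoski derivative over the alphabet {r,s}. -/
def D (r s : ℕ) (w : List ℕ) : List ℕ :=
  match rle w with
  | [] => []
  | [(_, n)] => if n < s then [] else [n]
  | ps => ((fixRun r s ((fixRun r s ps).reverse)).reverse).map Prod.snd

/-- A C∞-word over {r,s}: all iterated derivatives are words over {r,s}. -/
def IsCInf (r s : ℕ) (w : List ℕ) : Prop :=
  ∀ k : ℕ, ∀ a ∈ (D r s)^[k] w, a = r ∨ a = s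

/-- `t` enumerates the starting indices of the (maximal) runs of the sequence `z`. -/
def IsRunPartition (z : ℕ → ℕ) (t : ℕ → ℕ) : Prop :=
  t 0 = 0 ∧ StrictMono t ∧
  (∀ k i, t k ≤ i → i < t (k + 1) → z i = z (t k)) ∧
  (∀ k, z (t (k + 1)) ≠ z (t k))

/-- `w` is the run-length sequence of `z`. -/
def IsRunLengthSeq (z w : ℕ → ℕ) : Prop :=
  ∃ t, IsRunPartition z t ∧ ∀ k, w k = t (k + 1) - t k

/-- A Kolakoski sequence over {r,s}: a sequence over {r,s} equal to its own run-length sequence. -/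
def IsKolakoski (r s : ℕ) (z : ℕ → ℕ) : Prop :=
  (∀ n, z n = r ∨ z n = s) ∧ IsRunLengthSeq z z

def EventuallyPeriodic (z : ℕ → ℕ) : Prop :=
  ∃ m q : ℕ, 1 ≤ q ∧ ∀ i, m ≤ i → z (i + q) = z i

/-- `w` occurs as a factor of the infinite sequence `z`. -/
def FactorOf (w : List ℕ) (z : ℕ → ℕ) : Prop :=
  ∃ i, w = (List.range w.length).map fun k => z (i + k)

/-- Letter-exchange on words over {r,s}. -/
def exch (r s : ℕ) (w : List ℕ) : List ℕ := w.map fun a => if a = r then s else r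

/-- Number of occurrences of `w` as a factor of the prefix of length `n` of `z`. -/
def countOcc (z : ℕ → ℕ) (w : List ℕ) (n : ℕ) : ℕ :=
  ((Finset.range n).filter fun i => i + w.length ≤ n ∧ ∀ k < w.length, z (i + k) = w.getD k 0).card

/-- All words of length n over {r,s}. -/
def allWords (r s : ℕ) : ℕ → Finset (List ℕ)
  | 0 => {[]}
  | n + 1 => (allWords r s n).image (List.cons r) ∪ (allWords r s n).image (List.cons s)


/-- One step of the position-alternating substitution over {1,2}: the letter at
(1-based) position `p` is mapped by σ₀ (1↦1, 2↦11) if `p` is even, and by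
σ₁ (1↦2, 2↦22) if `p` is odd (i.e. 0-based index `i` even ↦ σ₁, odd ↦ σ₀). -/
def kolStep (w : List ℕ) : List ℕ :=
  ((w.zipIdx.map Prod.swap).map fun p =>
    if p.1 % 2 = 0 then (if p.2 = 2 then [2, 2] else [2])
    else (if p.2 = 2 then [1, 1] else [1])).flatten

/-- Structured form of the substitution with an alternating flag. -/
def kolAux : Bool → List ℕ → List ℕ
  | _, [] => []
  | b, a :: t => (List.replicate a (if b then 2 else 1)) ++ kolAux (!b) t

lemma kolAux_letters : ∀ (b : Bool) (w : List ℕ), ∀ x ∈ kolAux b w, x = 1 ∨ x = 2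
  | _, [], x, hx => by simp [kolAux] at hx
  | b, a :: t, x, hx => by
    rw [kolAux, List.mem_append] at hx
    rcases hx with hx | hx
    · rw [List.mem_replicate] at hx
      cases b <;> simp_all
    · exact kolAux_letters _ t x hx

lemma kolAux_length : ∀ (b : Bool) (w : List ℕ), (kolAux b w).length = w.sum
  | _, [] => rfl
  | b, a :: t => by
    rw [kolAux, List.length_append, List.length_replicate, kolAux_length, List.sum_cons]

lemma kolAux_getD : ∀ (w : List ℕ) (b : Bool) (k d : ℕ), k < w.length → d < w.getD k 0 →
    (kolAux b w).getD ((w.take k).sum + d) 0 = if b = decide (k % 2 = 0) then 2 else 1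
  | [], _, k, _, hk, _ => by simp at hk
  | a :: t, b, 0, d, hk, hd => by
    simp only [List.getD_cons_zero] at hd
    rw [kolAux, List.take_zero, List.sum_nil, Nat.zero_add,
      List.getD_append _ _ _ _ (by simpa using hd)]
    cases b <;> simp [List.getD_eq_getElem?_getD, List.getElem?_replicate, hd]
  | a :: t, b, k + 1, d, hk, hd => by
    simp only [List.getD_cons_succ] at hd
    rw [kolAux, List.take_cons (Nat.succ_pos k), List.sum_cons,
      List.getD_append_right _ _ _ _ (by simp [Nat.add_assoc]),
      List.length_replicate]
    have heq : a + (List.take (k.succ - 1) t).sum + d - a = (t.take k).sum + d := by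
      rw [Nat.succ_sub_one]; omega
    rw [heq, kolAux_getD t (!b) k d (by simpa using hk) hd]
    have hpar : (decide ((k + 1) % 2 = 0)) = !(decide (k % 2 = 0)) := by
      rcases Nat.even_or_odd k with h | h
      · simp [Nat.even_iff.mp h, Nat.succ_mod_two_eq_one_iff.mpr (Nat.even_iff.mp h)]
      · simp [Nat.odd_iff.mp h, Nat.succ_mod_two_eq_zero_iff.mpr (Nat.odd_iff.mp h)]
    cases b <;> simp [hpar]

lemma kolStep_enumFrom : ∀ (w : List ℕ) (n : ℕ), (∀ a ∈ w, a = 1 ∨ a = 2) →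
    (((w.zipIdx n).map Prod.swap).map fun p =>
      if p.1 % 2 = 0 then (if p.2 = 2 then [2, 2] else [2])
      else (if p.2 = 2 then [1, 1] else [1])).flatten = kolAux (decide (n % 2 = 0)) w
  | [], _, _ => rfl
  | a :: t, n, h => by
    rw [List.zipIdx_cons, List.map_cons, List.map_cons, List.flatten_cons,
      show _ = kolAux _ t from kolStep_enumFrom t (n + 1)
        (fun x hx => h x (List.mem_cons_of_mem _ hx)), kolAux]
    have hpar : (decide ((n + 1) % 2 = 0)) = !(decide (n % 2 = 0)) := by
      rcases Nat.even_or_odd n with h | h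
      · simp [Nat.even_iff.mp h, Nat.succ_mod_two_eq_one_iff.mpr (Nat.even_iff.mp h)]
      · simp [Nat.odd_iff.mp h, Nat.succ_mod_two_eq_zero_iff.mpr (Nat.odd_iff.mp h)]
    rw [hpar]
    congr 1
    rcases h a (List.mem_cons_self (a := a) (l := t)) with rfl | rfl <;>
      rcases Nat.even_or_odd n with hn | hn
    · simp [Nat.even_iff.mp hn, List.replicate]
    · simp [Nat.odd_iff.mp hn, List.replicate]
    · simp [Nat.even_iff.mp hn, List.replicate]
    · simp [Nat.odd_iff.mp hn, List.replicate]

lemma kolStep_eq (w : List ℕ) (h : ∀ a ∈ w, a = 1 ∨ a = 2) :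
    kolStep w = kolAux true w := by
  exact kolStep_enumFrom w 0 h

lemma kolStep_prefix {u v : List ℕ} (h : u <+: v) : kolStep u <+: kolStep v := by
  obtain ⟨r, rfl⟩ := h
  simp only [kolStep]
  rw [List.zipIdx_append, List.map_append, List.map_append, List.flatten_append]
  exact ⟨_, rfl⟩

def W (n : ℕ) : List ℕ := kolStep^[n] [2]

lemma W_succ (n : ℕ) : W (n + 1) = kolStep (W n) := Function.iterate_succ_apply' _ _ _

lemma W_letters : ∀ n, ∀ a ∈ W n, a = 1 ∨ a = 2
  | 0, a, ha => by simp [W] at ha; omega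
  | n + 1, a, ha => by
    rw [W_succ, kolStep_eq _ (W_letters n)] at ha
    exact kolAux_letters _ _ a ha

lemma W_succ' (n : ℕ) : W (n + 1) = kolAux true (W n) := by
  rw [W_succ, kolStep_eq _ (W_letters n)]

lemma W_prefix_succ (n : ℕ) : W n <+: W (n + 1) := by
  induction n with
  | zero => exact ⟨[2], rfl⟩
  | succ n ih =>
    have := kolStep_prefix ih
    rwa [← W_succ, ← W_succ] at this

lemma W_prefix {m n : ℕ} (h : m ≤ n) : W m <+: W n := by
  induction n with
  | zero => rw [Nat.le_zero.mp h]
  | succ n ih =>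
    rcases Nat.lt_or_ge m (n+1) with h' | h'
    · exact (ih (by omega)).trans (W_prefix_succ n)
    · rw [Nat.le_antisymm h h']

lemma W_head (n : ℕ) : ∃ r, W n = 2 :: r := by
  obtain ⟨r, hr⟩ := W_prefix (Nat.zero_le n)
  exact ⟨r, by simpa [W] using hr.symm⟩

lemma W_length (n : ℕ) : n + 1 ≤ (W n).length := by
  induction n with
  | zero => simp [W]
  | succ n ih =>
    obtain ⟨r, hr⟩ := W_head n
    have hlets : ∀ i ∈ r, 1 ≤ i := by
      intro i hi
      rcases W_letters n i (by rw [hr]; exact List.mem_cons_of_mem _ hi) with rfl | rfl <;> omega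
    have h2 := List.length_le_sum_of_one_le r hlets
    rw [W_succ', kolAux_length, hr, List.sum_cons]
    rw [hr, List.length_cons] at ih
    omega

lemma prefix_getD {u v : List ℕ} (h : u <+: v) {i : ℕ} (hi : i < u.length) :
    u.getD i 0 = v.getD i 0 := by
  obtain ⟨r, rfl⟩ := h
  rw [List.getD_append _ _ _ _ hi]

lemma W_getD_eq (n i : ℕ) (h : i < (W n).length) :
    (W n).getD i 0 = (W (i + 1)).getD i 0 := by
  rcases Nat.le_total n (i + 1) with h' | h'
  · exact prefix_getD (W_prefix h') h
  · exact (prefix_getD (W_prefix h') (by have := W_length (i+1); omega)).symm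

lemma take_sum_getD (l : List ℕ) : ∀ k, k ≤ l.length →
    (l.take k).sum = ∑ j ∈ Finset.range k, l.getD j 0 := by
  intro k
  induction k with
  | zero => simp
  | succ k ih =>
    intro hk
    rw [List.take_succ, List.sum_append, ih (by omega), Finset.sum_range_succ]
    congr 1
    rw [List.getElem?_eq_getElem (by omega)]
    simp [List.getD_eq_getElem?_getD, List.getElem?_eq_getElem (show k < l.length by omega)]


/-- Iterating the alternating substitution from the seed `2` gives words,
each a prefix of the next, converging to the Kolakoski sequence over {1,2} starting with 2. -/
theorem kolakoski_alternating_substitution :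
    (∀ n : ℕ, kolStep^[n] [2] <+: kolStep^[n + 1] [2]) ∧
    ∃ z : ℕ → ℕ,
      (∀ n i : ℕ, i < (kolStep^[n] [2]).length → (kolStep^[n] [2]).getD i 0 = z i) ∧
      IsKolakoski 1 2 z ∧ z 0 = 2 := by
  refine ⟨W_prefix_succ, fun i => (W (i + 1)).getD i 0, W_getD_eq, ⟨?_, ?_⟩, ?_⟩
  · -- letters
    intro n
    have h := W_length (n + 1)
    have : (W (n+1)).getD n 0 ∈ W (n+1) := by
      rw [List.getD_eq_getElem?_getD, List.getElem?_eq_getElem (by omega)]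
      exact List.getElem_mem _
    exact W_letters (n+1) _ this
  · -- run length seq
    set z : ℕ → ℕ := fun i => (W (i + 1)).getD i 0 with hz
    have hz12 : ∀ n, z n = 1 ∨ z n = 2 := by
      intro n
      have h := W_length (n + 1)
      have : (W (n+1)).getD n 0 ∈ W (n+1) := by
        rw [List.getD_eq_getElem?_getD, List.getElem?_eq_getElem (by omega)]
        exact List.getElem_mem _
      exact W_letters (n+1) _ this
    set t : ℕ → ℕ := fun k => ∑ j ∈ Finset.range k, z j with ht
    have ht_succ : ∀ k, t (k + 1) = t k + z k := fun k => Finset.sum_range_succ _ _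
    have hz1 : ∀ k, 1 ≤ z k := fun k => by rcases hz12 k with h | h <;> omega
    -- main: for t k ≤ i < t (k+1), z i = if k % 2 = 0 then 2 else 1
    have main : ∀ k i, t k ≤ i → i < t (k + 1) → z i = if k % 2 = 0 then 2 else 1 := by
      intro k i h1 h2
      set n := i + k + 1 with hn
      have hkn : k < (W n).length := by have := W_length n; omega
      have hkn' : k ≤ (W n).length := by omega
      -- t k = ((W n).take k).sum
      have hagree : ∀ j < (W n).length, (W n).getD j 0 = z j := fun j hj => W_getD_eq n j hj
      have htk : ∀ m, m ≤ k → t m = (((W n).take m).sum) := by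
        intro m hm
        rw [take_sum_getD _ m (by omega)]
        exact (Finset.sum_congr rfl fun j hj => hagree j (by
          have := Finset.mem_range.mp hj; omega)).symm
      have hd : i - t k < (W n).getD k 0 := by
        rw [hagree k hkn]; rw [ht_succ] at h2; omega
      have hkey := kolAux_getD (W n) true k (i - t k) hkn hd
      rw [← htk k le_rfl, Nat.add_sub_cancel' h1, ← W_succ'] at hkey
      have hi_len : i < (W (n + 1)).length := by have := W_length (n + 1); omega
      rw [show z i = (W (n+1)).getD i 0 from (W_getD_eq (n + 1) i hi_len).symm, hkey]
      rcases Nat.even_or_odd k with h | h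
      · simp [Nat.even_iff.mp h]
      · simp [Nat.odd_iff.mp h]
    have hlt : ∀ k, t k < t (k + 1) := fun k => by rw [ht_succ]; have := hz1 k; omega
    have hztk : ∀ k, z (t k) = if k % 2 = 0 then 2 else 1 :=
      fun k => main k (t k) le_rfl (hlt k)
    refine ⟨t, ⟨by simp [ht], strictMono_nat_of_lt_succ hlt, ?_, ?_⟩, ?_⟩
    · intro k i h1 h2
      rw [main k i h1 h2, hztk k]
    · intro k
      rw [hztk k, hztk (k + 1)]
      rcases Nat.even_or_odd k with h | h
      · simp [Nat.even_iff.mp h, Nat.succ_mod_two_eq_one_iff.mpr (Nat.even_iff.mp h)]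
      · simp [Nat.odd_iff.mp h, Nat.succ_mod_two_eq_zero_iff.mpr (Nat.odd_iff.mp h)]
    · intro k; rw [ht_succ]; omega
  · -- z 0 = 2
    show (W 1).getD 0 0 = 2
    rfl


end Kola
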